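/- For every star expression e of the guarded-semilattice star fragment (GKAT syntax) and every b ⊆ At, if e ⇒ b then GS* ⊢ e = 1 +_b ∂e. -/

import Mathlib

/-- Star expressions for the theory of guarded semilattices (the syntax of
GKAT): `e ::= 0 | 1 | a | e1 +_b e2 | e1·e2 | e^(b)` with `b ⊆ At`. -/
inductive GExp (At A : Type) : Type
  | zero : GExp At A
  | one : GExp At A
  | act : A → GExp At A
  | add : Finset At → GExp At A → GExp At A → GExp At A
  | seq : GExp At A → GExp At A → GExp At A
  | star : Finset At → GExp At A → GExp At A
  deriving DecidableEq

namespace GExp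

variable {At A : Type} [Fintype At] [DecidableEq At] [DecidableEq A]

/-- The small-step semantics `ℓ(e) : At → {⊥} ⊕ {✓} ⊕ (A × GExp)`, where
`⊥` is represented as `none`, `✓` as `some none`, and a transition `(a, e')`
as `some (some (a, e'))`. -/
def ell : GExp At A → At → Option (Option (A × GExp At A))
  | zero, _ => none
  | one, _ => some none
  | act a, _ => some (some (a, one))
  | add b e f, ξ => if ξ ∈ b then ell e ξ else ell f ξ
  | seq e f, ξ =>
      match ell e ξ with
      | none => none
      | some none => ell f ξ
      | some (some (a, e')) => some (some (a, seq e' f))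
  | star b e, ξ =>
      if ξ ∈ b then
        match ell e ξ with
        | some (some (a, e')) => some (some (a, seq e' (star b e)))
        | _ => none
      else some none

/-- The set of atoms at which `e` immediately accepts; `e ⇒ b` means
`acc e = b`. -/
def acc (e : GExp At A) : Finset At :=
  Finset.univ.filter (fun ξ => ell e ξ = some none)

/-- Guardedness of star expressions. -/
def Guarded : GExp At A → Prop
  | zero => True
  | one => False
  | act _ => True
  | add _ e f => Guarded e ∧ Guarded f
  | seq e f => Guarded e ∨ Guarded f
  | star _ _ => False

/-- Derivability `GS* ⊢ e = f` in equational logic from the guarded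
semilattice axioms, the sequencing axioms, the axiom
`(e +_c 1)^(b) = (e +_c 0)^(b)`, the guarded unrolling axiom, and the
fixpoint rule. -/
inductive GSd : GExp At A → GExp At A → Prop
  | refl (e) : GSd e e
  | symm {e f} : GSd e f → GSd f e
  | trans {e f g} : GSd e f → GSd f g → GSd e g
  | addCongr (b) {e1 f1 e2 f2} :
      GSd e1 f1 → GSd e2 f2 → GSd (add b e1 e2) (add b f1 f2)
  | seqCongr {e1 f1 e2 f2} : GSd e1 f1 → GSd e2 f2 → GSd (seq e1 e2) (seq f1 f2)
  | starCongr (b) {e f} : GSd e f → GSd (star b e) (star b f)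
  | gs1 (b e) : GSd (add b e e) e
  | gs2 (e f) : GSd (add Finset.univ e f) e
  | gs3 (b e f) : GSd (add b e f) (add bᶜ f e)
  | gs4 (b c e f g) : GSd (add c (add b e f) g) (add (b ∩ c) e (add c f g))
  | oneSeq (e) : GSd (seq one e) e
  | seqOne (e) : GSd (seq e one) e
  | zeroSeq (e) : GSd (seq zero e) zero
  | seqAssoc (e f g) : GSd (seq e (seq f g)) (seq (seq e f) g)
  | distR (b e f g) : GSd (seq (add b e f) g) (add b (seq e g) (seq f g))
  | starOne (b c e) : GSd (star b (add c e one)) (star b (add c e zero))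
  | unroll (b) {e} : Guarded e → GSd (star b e) (add b (seq e (star b e)) one)
  | fix (b) {e f g} : GSd g (add b (seq e g) f) → Guarded e → GSd g (seq (star b e) f)

/-- The derivative `∂e`: `∂0 = 0`, `∂1 = 0`, `∂a = a`,
`∂(e +_c f) = ∂e +_c ∂f`, and, when `e ⇒ b`, `∂(e·f) = ∂f +_b ∂e·f` and
`∂(e^(c)) = 0 +_b ∂e·e^(c)`. -/
def deriv : GExp At A → GExp At A
  | zero => zero
  | one => zero
  | act a => act a
  | add c e f => add c (deriv e) (deriv f)
  | seq e f => add (acc e) (deriv f) (seq (deriv e) f)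
  | star c e => add (acc e) zero (seq (deriv e) (star c e))

end GExp


namespace GExp

section Aux

set_option linter.unusedSectionVars false

variable {At A : Type} [Fintype At] [DecidableEq At] [DecidableEq A]

open Finset

lemma acc_zero : acc (zero : GExp At A) = ∅ := by
  simp [acc, ell]

lemma acc_one : acc (one : GExp At A) = Finset.univ := by
  simp [acc, ell]

lemma acc_act (a : A) : acc (act a : GExp At A) = ∅ := by
  simp [acc, ell]

lemma acc_add (c : Finset At) (e f : GExp At A) :
    acc (add c e f) = (acc e ∩ c) ∪ (acc f ∩ cᶜ) := by
  ext ξ; simp only [acc, mem_filter, mem_univ, true_and, mem_inter, mem_union, mem_compl]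
  by_cases h : ξ ∈ c <;> simp [ell, h]

lemma acc_seq (e f : GExp At A) : acc (seq e f) = acc e ∩ acc f := by
  ext ξ
  simp only [acc, mem_filter, mem_univ, true_and, mem_inter]
  rcases h : ell e ξ with _ | _ | ⟨a, e'⟩ <;> simp [ell, h]

lemma acc_star (c : Finset At) (e : GExp At A) : acc (star c e) = cᶜ := by
  ext ξ
  simp only [acc, mem_filter, mem_univ, true_and, mem_compl]
  by_cases h : ξ ∈ c
  · rcases he : ell e ξ with _ | _ | ⟨a, e'⟩ <;> simp [ell, h, he]
  · simp [ell, h]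

lemma guarded_deriv (e : GExp At A) : Guarded (deriv e) := by
  induction e with
  | zero => trivial
  | one => trivial
  | act a => trivial
  | add c e f ihe ihf => exact ⟨ihe, ihf⟩
  | seq e f ihe ihf => exact ⟨ihf, Or.inl ihe⟩
  | star c e ihe => exact ⟨trivial, Or.inl ihe⟩

lemma addEmpty (e f : GExp At A) : GSd (add (∅ : Finset At) e f) f := by
  have h := GSd.gs3 (∅ : Finset At) e f
  rw [Finset.compl_empty] at h
  exact h.trans (GSd.gs2 f e)

/-- Normal form: `e +_b (f +_c g) = f +_{c∩bᶜ} (g +_bᶜ e)`. -/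
lemma normalForm (b c : Finset At) (e f g : GExp At A) :
    GSd (add b e (add c f g)) (add (c ∩ bᶜ) f (add bᶜ g e)) :=
  (GSd.gs3 b e _).trans (GSd.gs4 c bᶜ f g e)

/-- The guard of the inner choice only matters outside `b`. -/
lemma guardChange {b c c' : Finset At} (h : c ∩ bᶜ = c' ∩ bᶜ)
    (e f g : GExp At A) :
    GSd (add b e (add c f g)) (add b e (add c' f g)) := by
  have h1 := normalForm b c e f g
  have h2 := normalForm b c' e f g
  rw [← h] at h2
  exact h1.trans h2.symm

lemma oneAbsorb (r s : Finset At) (g : GExp At A) :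
    GSd (add (r ∪ s) one g) (add r one (add (r ∪ s) one g)) := by
  have h1 : GSd (add (r ∪ s) (one : GExp At A) g)
      (add (r ∪ s) (add r one one) g) :=
    GSd.addCongr _ (GSd.gs1 r one).symm (GSd.refl g)
  have h2 := GSd.gs4 r (r ∪ s) (one : GExp At A) one g
  have hr : r ∩ (r ∪ s) = r := Finset.inter_eq_left.mpr Finset.subset_union_left
  rw [hr] at h2
  exact h1.trans h2

lemma oneUnion (r s : Finset At) (g : GExp At A) :
    GSd (add r one (add s one g)) (add (r ∪ s) one g) := by
  have hc : s ∩ rᶜ = (r ∪ s) ∩ rᶜ := by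
    ext x; simp only [mem_inter, mem_compl, mem_union]; tauto
  exact (guardChange hc one one g).trans (oneAbsorb r s g).symm

lemma fund (e : GExp At A) : GSd e (add (acc e) one (deriv e)) := by
  induction e with
  | zero =>
      rw [acc_zero]
      exact (addEmpty one zero).symm
  | one =>
      rw [acc_one]
      exact (GSd.gs2 one zero).symm
  | act a =>
      rw [acc_act]
      exact (addEmpty one (act a)).symm
  | add c e f ihe ihf =>
      rw [acc_add]
      have h0 : GSd (add c e f)
          (add c (add (acc e) one (deriv e)) (add (acc f) one (deriv f))) :=
        GSd.addCongr c ihe ihf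
      have h1 := GSd.gs4 (acc e) c (one : GExp At A) (deriv e)
        (add (acc f) one (deriv f))
      have h2 : GSd (add c (deriv e) (add (acc f) one (deriv f)))
          (add (acc f ∩ cᶜ) one (add c (deriv e) (deriv f))) := by
        have g1 := GSd.gs3 c (deriv e) (add (acc f) one (deriv f))
        have g2 := GSd.gs4 (acc f) cᶜ (one : GExp At A) (deriv f) (deriv e)
        have g3 := GSd.addCongr (acc f ∩ cᶜ) (GSd.refl (one : GExp At A))
          (GSd.gs3 c (deriv e) (deriv f)).symm
        exact (g1.trans g2).trans g3
      have h3 := GSd.addCongr (acc e ∩ c) (GSd.refl (one : GExp At A)) h2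
      have h4 := oneUnion (acc e ∩ c) (acc f ∩ cᶜ) (add c (deriv e) (deriv f))
      exact ((h0.trans h1).trans h3).trans h4
  | seq e f ihe ihf =>
      rw [acc_seq]
      have s1 : GSd (seq e f) (seq (add (acc e) one (deriv e)) f) :=
        GSd.seqCongr ihe (GSd.refl f)
      have s2 := GSd.distR (acc e) (one : GExp At A) (deriv e) f
      have s3 := GSd.addCongr (acc e) (GSd.oneSeq f) (GSd.refl (seq (deriv e) f))
      have s4 := GSd.addCongr (acc e) ihf (GSd.refl (seq (deriv e) f))
      have s5 := GSd.gs4 (acc f) (acc e) (one : GExp At A) (deriv f)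
        (seq (deriv e) f)
      have hcomm : acc f ∩ acc e = acc e ∩ acc f := Finset.inter_comm _ _
      rw [hcomm] at s5
      exact (((s1.trans s2).trans s3).trans s4).trans s5
  | star c e ihe =>
      rw [acc_star]
      set d := deriv e with hd
      have t1 : GSd (star c e) (star c (add (acc e) one d)) := GSd.starCongr c ihe
      have t2 : GSd (star c (add (acc e) one d)) (star c (add (acc e)ᶜ d one)) :=
        GSd.starCongr c (GSd.gs3 (acc e) one d)
      have t3 := GSd.starOne c (acc e)ᶜ d
      have hse : GSd (star c e) (star c (add (acc e)ᶜ d zero)) :=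
        (t1.trans t2).trans t3
      have hg : Guarded (add (acc e)ᶜ d (zero : GExp At A)) :=
        ⟨guarded_deriv e, trivial⟩
      have t4 := GSd.unroll c hg
      set s0 := star c (add (acc e)ᶜ d zero) with hs0
      have t5 := GSd.distR (acc e)ᶜ d (zero : GExp At A) s0
      have t6 := GSd.addCongr (acc e)ᶜ (GSd.refl (seq d s0)) (GSd.zeroSeq s0)
      have t7 := GSd.addCongr (acc e)ᶜ (GSd.seqCongr (GSd.refl d) hse.symm)
        (GSd.refl (zero : GExp At A))
      have t8 := (GSd.gs3 (acc e) (zero : GExp At A) (seq d (star c e))).symm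
      have t9 : GSd (star c e)
          (add c (add (acc e) zero (seq d (star c e))) one) :=
        (hse.trans t4).trans
          (GSd.addCongr c ((((t5.trans t6).trans t7).trans t8)) (GSd.refl one))
      exact t9.trans (GSd.gs3 c _ one)

end Aux

end GExp

/-- For every star expression `e` of the guarded-semilattice star fragment
(GKAT syntax) and every `b ⊆ At`: if `e ⇒ b` then `GS* ⊢ e = 1 +_b ∂e`. -/
theorem gs_deriv_decomposition {At A : Type} [Fintype At] [DecidableEq At]
    [DecidableEq A] (e : GExp At A) (b : Finset At) (hb : GExp.acc e = b) :
    GExp.GSd e (GExp.add b GExp.one (GExp.deriv e)) := by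
  subst hb; exact GExp.fund e
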